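/- Let S^*_{ac} and S^{**}_{ac} denote the constrained available storages with respect to ground states x* and x** respectively, for a system cyclo-dissipative with respect to both ground states (with reachability/controllability). Then S^*_{ac}(x**) + S^{**}_{ac}(x*) ≤ 0. Dually, S^*_{rc}(x**) + S^{**}_{rc}(x*) ≥ 0. -/

import Mathlib

open Set Filter

/-- An abstract system: a set of trajectories, each recorded as
(initial state, final state, integral of the supply rate along the trajectory). -/
structure Sys (X : Type) where
  Traj : Set (X × X × ℝ)

/-- `S` is a storage function: the dissipation inequality holds along all trajectories. -/
def IsStorage {X : Type} (P : Sys X) (S : X → ℝ) : Prop :=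
  ∀ τ ∈ P.Traj, S τ.2.1 ≤ S τ.1 + τ.2.2

/-- Cyclo-dissipativity: the supply integral is nonnegative along every cyclic trajectory. -/
def CycloDiss {X : Type} (P : Sys X) : Prop :=
  ∀ τ ∈ P.Traj, τ.2.1 = τ.1 → 0 ≤ τ.2.2

/-- Cyclo-dissipativity with respect to the ground state `xs`. -/
def CycloDissAt {X : Type} (P : Sys X) (xs : X) : Prop :=
  ∀ r : ℝ, (xs, xs, r) ∈ P.Traj → 0 ≤ r

/-- Available storage `S_a(x)`: sup of `-∫ s` over trajectories starting at `x`. -/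
noncomputable def Sa {X : Type} (P : Sys X) (x : X) : EReal :=
  sSup {e : EReal | ∃ y r, (x, y, r) ∈ P.Traj ∧ e = ((-r : ℝ) : EReal)}

/-- Required supply `S_r(x)`: inf of `∫ s` over trajectories ending at `x`. -/
noncomputable def Sr {X : Type} (P : Sys X) (x : X) : EReal :=
  sInf {e : EReal | ∃ y r, (y, x, r) ∈ P.Traj ∧ e = ((r : ℝ) : EReal)}

/-- Constrained available storage `S_{ac}(x)` w.r.t. ground state `xs`:
sup of `-∫ s` over trajectories from `x` to `xs`. -/
noncomputable def Sac {X : Type} (P : Sys X) (xs x : X) : EReal :=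
  sSup {e : EReal | ∃ r, (x, xs, r) ∈ P.Traj ∧ e = ((-r : ℝ) : EReal)}

/-- Constrained required supply `S_{rc}(x)` w.r.t. ground state `xs`:
inf of `∫ s` over trajectories from `xs` to `x`. -/
noncomputable def Src {X : Type} (P : Sys X) (xs x : X) : EReal :=
  sInf {e : EReal | ∃ r, (xs, x, r) ∈ P.Traj ∧ e = ((r : ℝ) : EReal)}

/-- Trajectories can be concatenated, supply integrals adding up. -/
def HasConcat {X : Type} (P : Sys X) : Prop :=
  ∀ x y z r₁ r₂, (x, y, r₁) ∈ P.Traj → (y, z, r₂) ∈ P.Traj → (x, z, r₁ + r₂) ∈ P.Traj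

/-- Every state admits the trivial trajectory of duration zero. -/
def HasTrivial {X : Type} (P : Sys X) : Prop := ∀ x, (x, x, (0:ℝ)) ∈ P.Traj

/-- Every state is reachable from `xs`. -/
def ReachableFrom {X : Type} (P : Sys X) (xs : X) : Prop := ∀ x, ∃ r, (xs, x, r) ∈ P.Traj

/-- Every state can be steered to `xs`. -/
def ControllableTo {X : Type} (P : Sys X) (xs : X) : Prop := ∀ x, ∃ r, (x, xs, r) ∈ P.Traj

/-- for two ground states, S*_ac(x**) + S**_ac(x*) ≤ 0 and S*_rc(x**) + S**_rc(x*) ≥ 0. -/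
theorem stmt9 {X : Type} (P : Sys X) (x1 x2 : X)
    (hcd1 : CycloDissAt P x1) (hcd2 : CycloDissAt P x2)
    (hR1 : ReachableFrom P x1) (hC1 : ControllableTo P x1)
    (hR2 : ReachableFrom P x2) (hC2 : ControllableTo P x2)
    (hcat : HasConcat P) (htriv : HasTrivial P) :
    Sac P x1 x2 + Sac P x2 x1 ≤ 0 ∧ 0 ≤ Src P x1 x2 + Src P x2 x1 := by
  obtain ⟨r₀, hr₀⟩ := hC1 x2   -- (x2, x1, r₀)
  obtain ⟨r₁, hr₁⟩ := hC2 x1   -- (x1, x2, r₁)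
  obtain ⟨q₀, hq₀⟩ := hR1 x2   -- (x1, x2, q₀)
  obtain ⟨q₁, hq₁⟩ := hR2 x1   -- (x2, x1, q₁)
  -- key inequality: any r (x2→x1) and r' (x1→x2) satisfy 0 ≤ r + r'
  have key : ∀ r r' : ℝ, (x2, x1, r) ∈ P.Traj → (x1, x2, r') ∈ P.Traj → 0 ≤ r + r' := by
    intro r r' h h'
    exact hcd2 (r + r') (hcat x2 x1 x2 r r' h h')
  constructor
  · set a := Sac P x1 x2 with ha
    set b := Sac P x2 x1 with hb
    -- a ≤ r' for every trajectory (x1,x2,r')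
    have hale : ∀ r' : ℝ, (x1, x2, r') ∈ P.Traj → a ≤ (r' : EReal) := by
      intro r' h'
      refine sSup_le ?_
      rintro e ⟨r, h, rfl⟩
      have := key r r' h h'; exact_mod_cast (by linarith : -r ≤ r')
    have hatop : a ≠ ⊤ := fun h => by
      have := hale r₁ hr₁; rw [h] at this; exact (EReal.coe_lt_top r₁).not_ge this
    have habot : a ≠ ⊥ := fun h => by
      have : ((-r₀ : ℝ) : EReal) ≤ a := le_sSup ⟨r₀, hr₀, rfl⟩
      rw [h] at this; exact (EReal.bot_lt_coe _).not_ge this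
    lift a to ℝ using ⟨hatop, habot⟩ with aR
    have hble : b ≤ ((-aR : ℝ) : EReal) := by
      refine sSup_le ?_
      rintro e ⟨r', h', rfl⟩
      have : aR ≤ r' := by exact_mod_cast hale r' h'
      exact_mod_cast (by linarith : -r' ≤ -aR)
    calc (aR : EReal) + b ≤ (aR : EReal) + ((-aR : ℝ) : EReal) :=
          add_le_add_right hble _
      _ = ((aR + -aR : ℝ) : EReal) := by rw [EReal.coe_add]
      _ = 0 := by norm_num
  · set c := Src P x1 x2 with hc
    set d := Src P x2 x1 with hd
    -- (-r : EReal) ≤ c for every trajectory (x2,x1,r)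
    have hcle : ∀ r : ℝ, (x2, x1, r) ∈ P.Traj → ((-r : ℝ) : EReal) ≤ c := by
      intro r h
      refine le_sInf ?_
      rintro e ⟨r', h', rfl⟩
      have := key r r' h h'; exact_mod_cast (by linarith : -r ≤ r')
    have hcbot : c ≠ ⊥ := fun h => by
      have := hcle q₁ hq₁; rw [h] at this; exact (EReal.bot_lt_coe _).not_ge this
    have hctop : c ≠ ⊤ := fun h => by
      have : c ≤ ((q₀ : ℝ) : EReal) := sInf_le ⟨q₀, hq₀, rfl⟩
      rw [h] at this; exact (EReal.coe_lt_top _).not_ge this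
    lift c to ℝ using ⟨hctop, hcbot⟩ with cR
    have hdle : ((-cR : ℝ) : EReal) ≤ d := by
      refine le_sInf ?_
      rintro e ⟨r, h, rfl⟩
      have : -r ≤ cR := by exact_mod_cast hcle r h
      exact_mod_cast (by linarith : -cR ≤ r)
    calc (0 : EReal) = ((cR + -cR : ℝ) : EReal) := by norm_num
      _ = (cR : EReal) + ((-cR : ℝ) : EReal) := by rw [EReal.coe_add]
      _ ≤ (cR : EReal) + d := add_le_add_right hdle _
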